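/- Let X ∈ ℝ^{m×n} have rank s ≤ k, with column space U and row space V, and let Ξ ∈ T_X M_{≤k} be any tangent vector, decomposed as Ξ = Ξ_s + Ξ_{k−s} per the tangent cone structure. If R(X,Ξ) is a best approximation of X + Ξ in Frobenius norm by a matrix of rank at most k, then ‖R(X,Ξ) − (X+Ξ)‖_F ≤ (1/√2)·‖Ξ‖_F. -/

import Mathlib

open Matrix
/-- Column space of a matrix. -/
def colSpace {m n : ℕ} (X : Matrix (Fin m) (Fin n) ℝ) : Set (Fin m → ℝ) :=
  {y | ∃ v, X.mulVec v = y}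

/-- Row space of a matrix. -/
def rowSpace {m n : ℕ} (X : Matrix (Fin m) (Fin n) ℝ) : Set (Fin n → ℝ) :=
  colSpace Xᵀ

/-- Orthogonal complement (w.r.t. the Euclidean dot product) of a set of vectors. -/
def perp {p : ℕ} (S : Set (Fin p → ℝ)) : Set (Fin p → ℝ) :=
  {x | ∀ u ∈ S, ∑ i, x i * u i = 0}

/-- `A ⊗ B`: matrices whose column space lies in `A` and row space lies in `B`. -/
def tensorSp {m n : ℕ} (A : Set (Fin m → ℝ)) (B : Set (Fin n → ℝ)) :
    Set (Matrix (Fin m) (Fin n) ℝ) :=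
  {Z | (∀ v, Z.mulVec v ∈ A) ∧ (∀ u, Zᵀ.mulVec u ∈ B)}

/-- Frobenius inner product. -/
noncomputable def frobInner {m n : ℕ} (A B : Matrix (Fin m) (Fin n) ℝ) : ℝ :=
  ∑ i, ∑ j, A i j * B i j

/-- Frobenius norm. -/
noncomputable def frobNorm {m n : ℕ} (A : Matrix (Fin m) (Fin n) ℝ) : ℝ :=
  Real.sqrt (frobInner A A)

/-- The tangent space `T_X M_s = (U⊗V) ⊕ (U^⊥⊗V) ⊕ (U⊗V^⊥)`, `U, V` column/row space of `X`. -/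
def tangentMs {m n : ℕ} (X : Matrix (Fin m) (Fin n) ℝ) : Set (Matrix (Fin m) (Fin n) ℝ) :=
  {Ξ | ∃ Z₁ ∈ tensorSp (colSpace X) (rowSpace X),
       ∃ Z₂ ∈ tensorSp (perp (colSpace X)) (rowSpace X),
       ∃ Z₃ ∈ tensorSp (colSpace X) (perp (rowSpace X)), Ξ = Z₁ + Z₂ + Z₃}

/-- Sequential tangent cone of a set of matrices, w.r.t. Frobenius distance. -/
def matTangentCone {m n : ℕ} (M : Set (Matrix (Fin m) (Fin n) ℝ))
    (X : Matrix (Fin m) (Fin n) ℝ) : Set (Matrix (Fin m) (Fin n) ℝ) :=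
  {Ξ | ∃ (Y : ℕ → Matrix (Fin m) (Fin n) ℝ) (a : ℕ → ℝ),
      (∀ i, Y i ∈ M) ∧ (∀ i, 0 < a i) ∧
      Filter.Tendsto (fun i => frobNorm (Y i - X)) Filter.atTop (nhds 0) ∧
      Filter.Tendsto (fun i => frobNorm (a i • (Y i - X) - Ξ)) Filter.atTop (nhds 0)}

/-- `P` is the orthogonal projector (symmetric idempotent matrix) onto `U`. -/
def IsOrthProjOnto {p : ℕ} (P : Matrix (Fin p) (Fin p) ℝ) (U : Set (Fin p → ℝ)) : Prop :=
  Pᵀ = P ∧ P * P = P ∧ colSpace P = U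

/-- For `X` of rank `s ≤ k`, any tangent vector `Ξ ∈ T_X M_{≤k}` and any best
Frobenius-norm approximation `R` of `X + Ξ` by a matrix of rank at most `k`,
`‖R − (X+Ξ)‖_F ≤ (1/√2) ‖Ξ‖_F`. -/

lemma matrix_ext_mulVec {p q : ℕ} {M N : Matrix (Fin p) (Fin q) ℝ}
    (h : ∀ v, M.mulVec v = N.mulVec v) : M = N := by
  ext i j
  have := congrFun (h (Pi.single j 1)) i
  simpa using this

lemma exists_good_proj {p q : ℕ} (A : Matrix (Fin p) (Fin q) ℝ) :
    ∃ P : Matrix (Fin p) (Fin p) ℝ, Pᵀ = P ∧ P * P = P ∧ P * A = A ∧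
      ∃ L : Matrix (Fin q) (Fin p) ℝ, A * L = P := by
  classical
  set S : Submodule ℝ (EuclideanSpace ℝ (Fin p)) := LinearMap.range (Matrix.toEuclideanLin A) with hS
  let f : EuclideanSpace ℝ (Fin p) →ₗ[ℝ] EuclideanSpace ℝ (Fin p) :=
    S.subtype ∘ₗ (S.orthogonalProjectionOnto).toLinearMap
  let e := WithLp.linearEquiv 2 ℝ (Fin p → ℝ)
  let eq' := WithLp.linearEquiv 2 ℝ (Fin q → ℝ)
  let g : (Fin p → ℝ) →ₗ[ℝ] (Fin p → ℝ) := e.toLinearMap ∘ₗ f ∘ₗ e.symm.toLinearMap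
  set P : Matrix (Fin p) (Fin p) ℝ := LinearMap.toMatrix' g with hPdef
  have hPg : ∀ v, P.mulVec v = g v := by
    intro v
    rw [hPdef, ← Matrix.toLin'_apply, Matrix.toLin'_toMatrix']
  have hfix : ∀ x : EuclideanSpace ℝ (Fin p), x ∈ S → f x = x := by
    intro x hx
    exact (Submodule.starProjection_eq_self_iff (K := S)).mpr hx
  have hmem : ∀ x, f x ∈ S := fun x => (S.orthogonalProjectionOnto x).2
  have hidem : P * P = P := by
    apply matrix_ext_mulVec; intro v
    rw [← Matrix.mulVec_mulVec, hPg, hPg]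
    simp only [g, LinearMap.comp_apply, LinearEquiv.coe_coe, LinearEquiv.symm_apply_apply]
    rw [hfix _ (hmem _)]
  have htoEuc : ∀ (w : EuclideanSpace ℝ (Fin q)), Matrix.toEuclideanLin A w = e.symm (A.mulVec (eq' w)) := by
    intro w; rfl
  have hcolA : ∀ v : Fin q → ℝ, (e.symm (A.mulVec v) : EuclideanSpace ℝ (Fin p)) ∈ S := by
    intro v
    exact ⟨eq'.symm v, htoEuc _⟩
  have hPA : P * A = A := by
    apply matrix_ext_mulVec; intro v
    rw [← Matrix.mulVec_mulVec, hPg]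
    simp only [g, LinearMap.comp_apply, LinearEquiv.coe_coe]
    rw [hfix _ (hcolA v)]
    exact e.apply_symm_apply _
  have hsingle : ∀ (x : EuclideanSpace ℝ (Fin p)) (i : Fin p),
      (e x) i = @inner ℝ _ _ x ((e.symm (Pi.single i 1) : EuclideanSpace ℝ (Fin p))) := by
    intro x i
    have h2 : (e.symm (Pi.single i 1) : EuclideanSpace ℝ (Fin p)) = EuclideanSpace.single i 1 := rfl
    rw [h2, EuclideanSpace.inner_single_right]
    simp
    rfl
  have hsym : Pᵀ = P := by
    ext i j
    show P j i = P i j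
    have hcol : ∀ (a b : Fin p), P a b = (P.mulVec (Pi.single b 1)) a := by
      intro a b; simp
    rw [hcol j i, hcol i j, hPg, hPg]
    simp only [g, LinearMap.comp_apply, LinearEquiv.coe_coe]
    rw [hsingle, hsingle]
    show @inner ℝ _ _ (S.starProjection (e.symm (Pi.single i 1))) (e.symm (Pi.single j 1))
       = @inner ℝ _ _ (S.starProjection (e.symm (Pi.single j 1))) (e.symm (Pi.single i 1))
    rw [Submodule.inner_starProjection_left_eq_right, real_inner_comm]
  have hL : ∀ j : Fin p, ∃ v : Fin q → ℝ, A.mulVec v = fun i => P i j := by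
    intro j
    obtain ⟨w, hw⟩ := hmem (e.symm (Pi.single j 1))
    refine ⟨eq' w, ?_⟩
    have h3 : A.mulVec (eq' w) = e (Matrix.toEuclideanLin A w) := rfl
    rw [h3, hw]
    funext i
    rw [show P i j = (P.mulVec (Pi.single j 1)) i by simp, hPg]
    rfl
  choose Lv hLv using hL
  refine ⟨P, hsym, hidem, hPA, Matrix.of (fun i j => Lv j i), ?_⟩
  ext i j
  have := congrFun (hLv j) i
  simp [Matrix.mul_apply, Matrix.mulVec, dotProduct] at this ⊢
  exact this

lemma frobInner_eq_trace {m n : ℕ} (A B : Matrix (Fin m) (Fin n) ℝ) :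
    frobInner A B = (Aᵀ * B).trace := by
  simp only [frobInner, Matrix.trace, Matrix.diag, Matrix.mul_apply, Matrix.transpose_apply]
  rw [Finset.sum_comm]

lemma frobInner_comm {m n : ℕ} (A B : Matrix (Fin m) (Fin n) ℝ) :
    frobInner A B = frobInner B A := by
  simp only [frobInner]; congr 1; ext i; congr 1; ext j; ring

lemma frobInner_add_left {m n : ℕ} (A B C : Matrix (Fin m) (Fin n) ℝ) :
    frobInner (A + B) C = frobInner A C + frobInner B C := by
  simp only [frobInner, Matrix.add_apply, add_mul, Finset.sum_add_distrib]

lemma frobInner_zero_right {m n : ℕ} (A : Matrix (Fin m) (Fin n) ℝ) :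
    frobInner A 0 = 0 := by simp [frobInner]

lemma frobInner_self_nonneg {m n : ℕ} (A : Matrix (Fin m) (Fin n) ℝ) :
    0 ≤ frobInner A A :=
  Finset.sum_nonneg fun i _ => Finset.sum_nonneg fun j _ => mul_self_nonneg _

lemma frobInner_mul_left {m n p : ℕ} (M : Matrix (Fin m) (Fin p) ℝ)
    (A : Matrix (Fin p) (Fin n) ℝ) (B : Matrix (Fin m) (Fin n) ℝ) :
    frobInner (M * A) B = frobInner A (Mᵀ * B) := by
  rw [frobInner_eq_trace, frobInner_eq_trace, Matrix.transpose_mul, Matrix.mul_assoc]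

lemma frobInner_mul_right {m n p : ℕ} (A : Matrix (Fin m) (Fin p) ℝ)
    (M : Matrix (Fin p) (Fin n) ℝ) (B : Matrix (Fin m) (Fin n) ℝ) :
    frobInner (A * M) B = frobInner A (B * Mᵀ) := by
  rw [frobInner_eq_trace, frobInner_eq_trace, Matrix.transpose_mul,
    Matrix.trace_mul_cycle, Matrix.mul_assoc, ← Matrix.mul_assoc, Matrix.trace_mul_comm]

lemma frob_split_left {m n : ℕ} (P : Matrix (Fin m) (Fin m) ℝ)
    (hP : Pᵀ = P) (hPP : P * P = P) (A : Matrix (Fin m) (Fin n) ℝ) :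
    frobInner A A = frobInner (P * A) (P * A)
      + frobInner ((1 - P) * A) ((1 - P) * A) := by
  have hd : A = P * A + (1 - P) * A := by
    rw [Matrix.sub_mul, Matrix.one_mul]; abel
  have hcross : frobInner (P * A) ((1 - P) * A) = 0 := by
    rw [frobInner_mul_left, ← Matrix.mul_assoc, hP, Matrix.mul_sub, Matrix.mul_one, hPP,
      sub_self, Matrix.zero_mul, frobInner_zero_right]
  calc frobInner A A = frobInner (P * A + (1 - P) * A) (P * A + (1 - P) * A) := by rw [← hd]
    _ = _ := by
      rw [frobInner_add_left, frobInner_comm (P*A) _, frobInner_comm ((1-P)*A) _,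
        frobInner_add_left, frobInner_add_left, frobInner_comm ((1-P)*A) (P*A), hcross]
      ring_nf

lemma frob_split_right {m n : ℕ} (Q : Matrix (Fin n) (Fin n) ℝ)
    (hQ : Qᵀ = Q) (hQQ : Q * Q = Q) (A : Matrix (Fin m) (Fin n) ℝ) :
    frobInner A A = frobInner (A * Q) (A * Q)
      + frobInner (A * (1 - Q)) (A * (1 - Q)) := by
  have hd : A = A * Q + A * (1 - Q) := by
    rw [Matrix.mul_sub, Matrix.mul_one]; abel
  have hcross : frobInner (A * Q) (A * (1 - Q)) = 0 := by
    rw [frobInner_mul_right, Matrix.mul_assoc, Matrix.sub_mul, Matrix.one_mul, hQ, hQQ,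
      sub_self, Matrix.mul_zero, frobInner_zero_right]
  calc frobInner A A = frobInner (A * Q + A * (1 - Q)) (A * Q + A * (1 - Q)) := by rw [← hd]
    _ = _ := by
      rw [frobInner_add_left, frobInner_comm (A*Q) _, frobInner_comm (A*(1-Q)) _,
        frobInner_add_left, frobInner_add_left, frobInner_comm (A*(1-Q)) (A*Q), hcross]
      ring_nf

open Filter Topology

lemma abs_entry_le_frobNorm {m n : ℕ} (M : Matrix (Fin m) (Fin n) ℝ) (a : Fin m) (b : Fin n) :
    |M a b| ≤ frobNorm M := by
  have h1 : M a b * M a b ≤ frobInner M M := by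
    have hrow : M a b * M a b ≤ ∑ j, M a j * M a j :=
      Finset.single_le_sum (f := fun j => M a j * M a j)
        (fun j _ => mul_self_nonneg _) (Finset.mem_univ b)
    exact hrow.trans (Finset.single_le_sum (f := fun i => ∑ j, M i j * M i j)
      (fun i _ => Finset.sum_nonneg fun j _ => mul_self_nonneg _) (Finset.mem_univ a))
  calc |M a b| = Real.sqrt (M a b * M a b) := (Real.sqrt_mul_self_eq_abs _).symm
    _ ≤ frobNorm M := Real.sqrt_le_sqrt h1

lemma tendsto_entry_of_frob {m n : ℕ} {F : ℕ → Matrix (Fin m) (Fin n) ℝ}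
    {F₀ : Matrix (Fin m) (Fin n) ℝ}
    (h : Tendsto (fun i => frobNorm (F i - F₀)) atTop (nhds 0)) (a : Fin m) (b : Fin n) :
    Tendsto (fun i => F i a b) atTop (nhds (F₀ a b)) := by
  rw [tendsto_iff_dist_tendsto_zero]
  apply squeeze_zero (fun i => dist_nonneg) (g := fun i => frobNorm (F i - F₀)) _ h
  intro i
  rw [Real.dist_eq]
  simpa using abs_entry_le_frobNorm (F i - F₀) a b

lemma tendsto_frobNorm_of_entry {m n : ℕ} {F : ℕ → Matrix (Fin m) (Fin n) ℝ}
    {F₀ : Matrix (Fin m) (Fin n) ℝ}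
    (h : ∀ a b, Tendsto (fun i => F i a b) atTop (nhds (F₀ a b))) :
    Tendsto (fun i => frobNorm (F i)) atTop (nhds (frobNorm F₀)) := by
  have h1 : Tendsto (fun i => frobInner (F i) (F i)) atTop (nhds (frobInner F₀ F₀)) := by
    unfold frobInner
    apply tendsto_finset_sum; intro a _
    apply tendsto_finset_sum; intro b _
    exact (h a b).mul (h a b)
  exact (Real.continuous_sqrt.continuousAt.tendsto).comp h1

lemma tendsto_entry_mul_right {m n r : ℕ} {F : ℕ → Matrix (Fin m) (Fin n) ℝ}
    {F₀ : Matrix (Fin m) (Fin n) ℝ} (C : Matrix (Fin n) (Fin r) ℝ)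
    (h : ∀ a b, Tendsto (fun i => F i a b) atTop (nhds (F₀ a b))) :
    ∀ a b, Tendsto (fun i => (F i * C) a b) atTop (nhds ((F₀ * C) a b)) := by
  intro a b
  simp only [Matrix.mul_apply]
  exact tendsto_finset_sum _ fun t _ => (h a t).mul_const _

lemma tendsto_entry_mul_left {m n r : ℕ} {F : ℕ → Matrix (Fin m) (Fin n) ℝ}
    {F₀ : Matrix (Fin m) (Fin n) ℝ} (C : Matrix (Fin r) (Fin m) ℝ)
    (h : ∀ a b, Tendsto (fun i => F i a b) atTop (nhds (F₀ a b))) :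
    ∀ a b, Tendsto (fun i => (C * F i) a b) atTop (nhds ((C * F₀) a b)) := by
  intro a b
  simp only [Matrix.mul_apply]
  exact tendsto_finset_sum _ fun t _ => (h t b).const_mul _

lemma tendsto_entry_add {m n : ℕ} {F G : ℕ → Matrix (Fin m) (Fin n) ℝ}
    {F₀ G₀ : Matrix (Fin m) (Fin n) ℝ}
    (hF : ∀ a b, Tendsto (fun i => F i a b) atTop (nhds (F₀ a b)))
    (hG : ∀ a b, Tendsto (fun i => G i a b) atTop (nhds (G₀ a b))) :
    ∀ a b, Tendsto (fun i => (F i + G i) a b) atTop (nhds ((F₀ + G₀) a b)) := by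
  intro a b
  simp only [Matrix.add_apply]
  exact (hF a b).add (hG a b)

lemma tendsto_entry_sub_const {m n : ℕ} {F : ℕ → Matrix (Fin m) (Fin n) ℝ}
    {F₀ : Matrix (Fin m) (Fin n) ℝ} (C : Matrix (Fin m) (Fin n) ℝ)
    (h : ∀ a b, Tendsto (fun i => F i a b) atTop (nhds (F₀ a b))) :
    ∀ a b, Tendsto (fun i => (F i - C) a b) atTop (nhds ((F₀ - C) a b)) := by
  intro a b
  simp only [Matrix.sub_apply]
  exact (h a b).sub_const _

lemma tendsto_entry_const {m n : ℕ} (C : Matrix (Fin m) (Fin n) ℝ) :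
    ∀ a b, Tendsto (fun _ : ℕ => C a b) atTop (nhds (C a b)) :=
  fun _ _ => tendsto_const_nhds


lemma frobNorm_neg {m n : ℕ} (A : Matrix (Fin m) (Fin n) ℝ) : frobNorm (-A) = frobNorm A := by
  simp [frobNorm, frobInner, Matrix.neg_apply]

lemma frobNorm_nonneg' {m n : ℕ} (A : Matrix (Fin m) (Fin n) ℝ) : 0 ≤ frobNorm A :=
  Real.sqrt_nonneg _

lemma sq_le_of_le_frobNorm {m n : ℕ} {r : ℝ} (hr : 0 ≤ r) {A : Matrix (Fin m) (Fin n) ℝ}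
    (h : r ≤ frobNorm A) : r ^ 2 ≤ frobInner A A := by
  have h2 : r ^ 2 ≤ (frobNorm A) ^ 2 := by
    apply pow_le_pow_left₀ hr h
  rwa [frobNorm, Real.sq_sqrt (frobInner_self_nonneg A)] at h2


theorem stmt_9 {m n s k : ℕ} (X : Matrix (Fin m) (Fin n) ℝ)
    (hrank : X.rank = s) (hsk : s ≤ k)
    (Ξ : Matrix (Fin m) (Fin n) ℝ)
    (hΞ : Ξ ∈ matTangentCone {Y : Matrix (Fin m) (Fin n) ℝ | Y.rank ≤ k} X)
    (R : Matrix (Fin m) (Fin n) ℝ) (hRrk : R.rank ≤ k)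
    (hbest : ∀ Y : Matrix (Fin m) (Fin n) ℝ, Y.rank ≤ k →
      frobNorm (R - (X + Ξ)) ≤ frobNorm (Y - (X + Ξ))) :
    frobNorm (R - (X + Ξ)) ≤ (1 / Real.sqrt 2) * frobNorm Ξ := by
  classical
  obtain ⟨Y, c, hYrk, hcpos, hY0, hYΞ⟩ := hΞ
  set E : ℕ → Matrix (Fin m) (Fin n) ℝ := fun i => Y i - X with hEdef
  have hYE : ∀ i, Y i = X + E i := fun i => by simp [hEdef]
  have hE0 : ∀ a b, Filter.Tendsto (fun i => E i a b) Filter.atTop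
      (nhds ((0 : Matrix (Fin m) (Fin n) ℝ) a b)) := by
    apply tendsto_entry_of_frob
    have : (fun i => frobNorm (E i - 0)) = fun i => frobNorm (Y i - X) := by
      funext i; rw [sub_zero]
    rw [this]; exact hY0
  have hSΞ : ∀ a b, Filter.Tendsto (fun i => (c i • E i) a b) Filter.atTop
      (nhds (Ξ a b)) := by
    apply tendsto_entry_of_frob
    exact hYΞ
  obtain ⟨P, hPt, hPP, hPX, L, hXL⟩ := exists_good_proj X
  obtain ⟨Q0, hQt, hQQ, hQXt, W0, hWX0⟩ := exists_good_proj Xᵀ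
  have hXQ : X * Q0 = X := by
    have h := congrArg Matrix.transpose hQXt
    rwa [Matrix.transpose_mul, Matrix.transpose_transpose, hQt] at h
  have hWX : W0ᵀ * X = Q0 := by
    have h := congrArg Matrix.transpose hWX0
    rwa [Matrix.transpose_mul, Matrix.transpose_transpose, hQt] at h
  have hX1Q : X * (1 - Q0) = 0 := by
    rw [Matrix.mul_sub, Matrix.mul_one, hXQ, sub_self]
  have h1PX : (1 - P) * X = 0 := by
    rw [Matrix.sub_mul, Matrix.one_mul, hPX, sub_self]
  set MM : Matrix (Fin n) (Fin n) ℝ := Q0 * (L * (Ξ * Q0)) with hMMdef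
  have hXMM : X * MM = P * Ξ * Q0 := by
    rw [hMMdef, ← Matrix.mul_assoc, hXQ, ← Matrix.mul_assoc, hXL, Matrix.mul_assoc]
  have h1QMM : (1 - Q0) * MM = 0 := by
    rw [hMMdef, ← Matrix.mul_assoc, Matrix.sub_mul, Matrix.one_mul, hQQ, sub_self,
      Matrix.zero_mul]
  set NN : Matrix (Fin m) (Fin m) ℝ := ((P * Ξ) * W0ᵀ) * P with hNNdef
  have hNNX : NN * X = P * Ξ * Q0 := by
    rw [hNNdef, Matrix.mul_assoc, hPX, Matrix.mul_assoc, hWX]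
  have hNN1P : NN * (1 - P) = 0 := by
    rw [hNNdef, Matrix.mul_assoc, Matrix.mul_sub, Matrix.mul_one, hPP, sub_self,
      Matrix.mul_zero]
  set r := frobNorm (R - (X + Ξ)) with hrdef
  have hrnn : 0 ≤ r := frobNorm_nonneg' _
  -- right competitor gives bound by ‖(1-P)ΞQ‖
  have hbound2 : r ≤ frobNorm ((1 - P) * Ξ * Q0) := by
    have hC2eq : ∀ i, Y i * (Q0 + c i • (1 - Q0)) =
        X + E i * Q0 + (c i • E i) * (1 - Q0) := by
      intro i
      rw [hYE i, Matrix.add_mul, Matrix.mul_add, Matrix.mul_add, Matrix.mul_smul,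
        Matrix.mul_smul, hX1Q, smul_zero, add_zero, hXQ, Matrix.smul_mul]
      abel
    have hH : ∀ (a : Fin m) (b : Fin n), Filter.Tendsto
        (fun i => (((X + E i * Q0 + (c i • E i) * (1 - Q0)) * (1 + MM) :
          Matrix (Fin m) (Fin n) ℝ)) a b) Filter.atTop
        (nhds ((((X + (0 : Matrix (Fin m) (Fin n) ℝ) * Q0 + Ξ * (1 - Q0)) * (1 + MM) :
          Matrix (Fin m) (Fin n) ℝ)) a b)) := by
      apply tendsto_entry_mul_right
      exact tendsto_entry_add (tendsto_entry_add (tendsto_entry_const X)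
        (tendsto_entry_mul_right Q0 hE0)) (tendsto_entry_mul_right (1 - Q0) hSΞ)
    have hfr : Filter.Tendsto
        (fun i => frobNorm ((X + E i * Q0 + (c i • E i) * (1 - Q0)) * (1 + MM) - (X + Ξ)))
        Filter.atTop
        (nhds (frobNorm ((X + (0 : Matrix (Fin m) (Fin n) ℝ) * Q0 + Ξ * (1 - Q0)) * (1 + MM)
          - (X + Ξ)))) :=
      tendsto_frobNorm_of_entry (tendsto_entry_sub_const (X + Ξ) hH)
    have hlim : (X + (0 : Matrix (Fin m) (Fin n) ℝ) * Q0 + Ξ * (1 - Q0)) * (1 + MM)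
        - (X + Ξ) = -((1 - P) * Ξ * Q0) := by
      rw [Matrix.zero_mul, add_zero, Matrix.mul_add, Matrix.mul_one, Matrix.add_mul,
        hXMM, Matrix.mul_assoc Ξ (1 - Q0) MM, h1QMM, Matrix.mul_zero, Matrix.mul_sub,
        Matrix.mul_one, Matrix.sub_mul, Matrix.one_mul, Matrix.sub_mul]
      abel
    rw [hlim, frobNorm_neg] at hfr
    apply ge_of_tendsto' hfr
    intro i
    have hr2 := hbest (Y i * (Q0 + c i • (1 - Q0)) * (1 + MM))
      (le_trans (Matrix.rank_mul_le_left _ _)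
        (le_trans (Matrix.rank_mul_le_left _ _) (hYrk i)))
    rwa [hC2eq i] at hr2
  -- left competitor gives bound by ‖PΞ(1-Q)‖
  have hbound3 : r ≤ frobNorm (P * Ξ * (1 - Q0)) := by
    have hC1eq : ∀ i, (1 + NN) * ((P + c i • (1 - P)) * Y i) =
        (1 + NN) * (X + P * E i + (1 - P) * (c i • E i)) := by
      intro i
      congr 1
      rw [hYE i, Matrix.add_mul, Matrix.mul_add, Matrix.mul_add, Matrix.smul_mul,
        Matrix.smul_mul, h1PX, smul_zero, hPX, Matrix.mul_smul]
      abel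
    have hH : ∀ (a : Fin m) (b : Fin n), Filter.Tendsto
        (fun i => (((1 + NN) * (X + P * E i + (1 - P) * (c i • E i)) :
          Matrix (Fin m) (Fin n) ℝ)) a b) Filter.atTop
        (nhds ((((1 + NN) * (X + P * (0 : Matrix (Fin m) (Fin n) ℝ) + (1 - P) * Ξ) :
          Matrix (Fin m) (Fin n) ℝ)) a b)) := by
      apply tendsto_entry_mul_left
      exact tendsto_entry_add (tendsto_entry_add (tendsto_entry_const X)
        (tendsto_entry_mul_left P hE0)) (tendsto_entry_mul_left (1 - P) hSΞ)
    have hfr : Filter.Tendsto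
        (fun i => frobNorm ((1 + NN) * (X + P * E i + (1 - P) * (c i • E i)) - (X + Ξ)))
        Filter.atTop
        (nhds (frobNorm ((1 + NN) * (X + P * (0 : Matrix (Fin m) (Fin n) ℝ) + (1 - P) * Ξ)
          - (X + Ξ)))) :=
      tendsto_frobNorm_of_entry (tendsto_entry_sub_const (X + Ξ) hH)
    have hlim : (1 + NN) * (X + P * (0 : Matrix (Fin m) (Fin n) ℝ) + (1 - P) * Ξ)
        - (X + Ξ) = -(P * Ξ * (1 - Q0)) := by
      rw [Matrix.mul_zero, add_zero, Matrix.add_mul, Matrix.one_mul, Matrix.mul_add,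
        hNNX, ← Matrix.mul_assoc NN (1 - P) Ξ, hNN1P, Matrix.zero_mul, Matrix.sub_mul,
        Matrix.one_mul, Matrix.mul_sub, Matrix.mul_one]
      abel
    rw [hlim, frobNorm_neg] at hfr
    apply ge_of_tendsto' hfr
    intro i
    have hr1 := hbest ((1 + NN) * ((P + c i • (1 - P)) * Y i))
      (le_trans (Matrix.rank_mul_le_right _ _)
        (le_trans (Matrix.rank_mul_le_right _ _) (hYrk i)))
    rwa [hC1eq i] at hr1
  -- Pythagoras
  have hpy : frobInner ((1 - P) * Ξ * Q0) ((1 - P) * Ξ * Q0)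
      + frobInner (P * Ξ * (1 - Q0)) (P * Ξ * (1 - Q0)) ≤ frobInner Ξ Ξ := by
    have e1 := frob_split_left P hPt hPP Ξ
    have e2 := frob_split_right Q0 hQt hQQ (P * Ξ)
    have e3 := frob_split_right Q0 hQt hQQ ((1 - P) * Ξ)
    have n2 := frobInner_self_nonneg ((P * Ξ) * Q0)
    have n4 := frobInner_self_nonneg (((1 - P) * Ξ) * (1 - Q0))
    linarith [e1, e2, e3, n2, n4]
  have h2 := sq_le_of_le_frobNorm hrnn hbound2
  have h3 := sq_le_of_le_frobNorm hrnn hbound3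
  have hsum : r ^ 2 ≤ frobInner Ξ Ξ / 2 := by linarith
  have hfin := Real.sqrt_le_sqrt hsum
  rw [Real.sqrt_sq hrnn] at hfin
  have hrw : Real.sqrt (frobInner Ξ Ξ / 2) = 1 / Real.sqrt 2 * frobNorm Ξ := by
    rw [Real.sqrt_div (frobInner_self_nonneg Ξ) 2, frobNorm, div_eq_mul_one_div, mul_comm]
  rw [← hrw]
  exact hfin
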